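/- Let k ≥ 2 be an integer and let n_i, for 2 ≤ i ≤ k, be nonnegative integers, not all zero. Set n = Σ_{i=2}^{k} n_i and N = Σ_{i=2}^{k} i·n_i. Then Σ_{i=2}^{k} n_i·(i−1)·log₂((N−n)/(i−1)) ≤ Σ_{i=2}^{k} n_i·i·log₂(n/i) − n·log₂ n + 2N·(1 + log₂ k). -/

import Mathlib

/-- The space bound of the succinct representation: with `n = Σᵢ nᵢ` and `N = Σᵢ i·nᵢ`
(not all `nᵢ` zero), `Σᵢ nᵢ(i−1) log₂((N−n)/(i−1)) ≤ Σᵢ nᵢ·i·log₂(n/i) − n log₂ n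
+ 2N(1 + log₂ k)`. -/
theorem stmt14 (k : ℕ) (hk : 2 ≤ k) (ni : ℕ → ℕ)
    (hne : ∃ i ∈ Finset.Icc 2 k, ni i ≠ 0)
    (n N : ℕ)
    (hn : n = ∑ i ∈ Finset.Icc 2 k, ni i)
    (hN : N = ∑ i ∈ Finset.Icc 2 k, i * ni i) :
    ∑ i ∈ Finset.Icc 2 k,
        (ni i : ℝ) * ((i : ℝ) - 1) * Real.logb 2 (((N : ℝ) - (n : ℝ)) / ((i : ℝ) - 1)) ≤
      (∑ i ∈ Finset.Icc 2 k, (ni i : ℝ) * i * Real.logb 2 ((n : ℝ) / i))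
        - (n : ℝ) * Real.logb 2 n + 2 * (N : ℝ) * (1 + Real.logb 2 k) := by
  have hn1 : 1 ≤ n := by
    obtain ⟨i, hi, hni⟩ := hne
    calc 1 ≤ ni i := Nat.one_le_iff_ne_zero.mpr hni
    _ ≤ n := hn ▸ Finset.single_le_sum (f := fun j => ni j) (fun j _ => Nat.zero_le _) hi
  have h2n : 2 * n ≤ N := by
    rw [hn, hN, Finset.mul_sum]
    exact Finset.sum_le_sum fun i hi =>
      Nat.mul_le_mul_right _ (Finset.mem_Icc.mp hi).1
  have hNk : N ≤ k * n := by
    rw [hn, hN, Finset.mul_sum]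
    exact Finset.sum_le_sum fun i hi =>
      Nat.mul_le_mul_right _ (Finset.mem_Icc.mp hi).2
  have hn1R : (1:ℝ) ≤ n := by exact_mod_cast hn1
  have hA1 : (1:ℝ) ≤ (N:ℝ) - n := by
    have : ((2*n : ℕ) : ℝ) ≤ N := by exact_mod_cast h2n
    push_cast at this; linarith
  have hkR : (2:ℝ) ≤ k := by exact_mod_cast hk
  have hlogk : 0 ≤ Real.logb 2 k := Real.logb_nonneg one_lt_two (by linarith)
  have hlogn : 0 ≤ Real.logb 2 n := Real.logb_nonneg one_lt_two hn1R
  have hsum : ∑ i ∈ Finset.Icc 2 k, (ni i : ℝ) * ((i:ℝ) - 1) = (N:ℝ) - n := by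
    rw [hn, hN]
    push_cast
    rw [← Finset.sum_sub_distrib]
    exact Finset.sum_congr rfl fun i _ => by ring
  have hNsum : ∑ i ∈ Finset.Icc 2 k, (ni i : ℝ) * (i:ℝ) = (N:ℝ) := by
    rw [hN]; push_cast
    exact Finset.sum_congr rfl fun i _ => (mul_comm _ _)
  -- Step 1 : bound LHS by (N-n) log (N-n)
  have step1 : ∑ i ∈ Finset.Icc 2 k,
      (ni i : ℝ) * ((i : ℝ) - 1) * Real.logb 2 (((N : ℝ) - (n : ℝ)) / ((i : ℝ) - 1)) ≤
      ((N:ℝ) - n) * Real.logb 2 ((N:ℝ) - n) := by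
    calc ∑ i ∈ Finset.Icc 2 k,
        (ni i : ℝ) * ((i : ℝ) - 1) * Real.logb 2 (((N : ℝ) - (n : ℝ)) / ((i : ℝ) - 1))
        ≤ ∑ i ∈ Finset.Icc 2 k,
        (ni i : ℝ) * ((i : ℝ) - 1) * Real.logb 2 ((N : ℝ) - (n : ℝ)) := by
          apply Finset.sum_le_sum
          intro i hi
          obtain ⟨h2i, hik⟩ := Finset.mem_Icc.mp hi
          have hi1 : (1:ℝ) ≤ (i:ℝ) - 1 := by
            have : (2:ℝ) ≤ (i:ℝ) := by exact_mod_cast h2i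
            linarith
          have hnonneg : 0 ≤ (ni i : ℝ) * ((i:ℝ) - 1) := by positivity
          apply mul_le_mul_of_nonneg_left _ hnonneg
          apply Real.logb_le_logb_of_le one_lt_two (by positivity)
          · rw [div_le_iff₀ (by linarith)]
            nlinarith
      _ = ((N:ℝ) - n) * Real.logb 2 ((N:ℝ) - n) := by
          rw [← Finset.sum_mul, hsum]
  -- Step 2 : log(N-n) ≤ log k + log n
  have step2 : Real.logb 2 ((N:ℝ) - n) ≤ Real.logb 2 k + Real.logb 2 n := by
    have hle : ((N:ℝ) - n) ≤ (k:ℝ) * n := by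
      have : (N:ℝ) ≤ (k:ℝ) * n := by exact_mod_cast hNk
      linarith
    calc Real.logb 2 ((N:ℝ) - n) ≤ Real.logb 2 ((k:ℝ) * n) :=
          Real.logb_le_logb_of_le one_lt_two (by linarith) hle
      _ = Real.logb 2 k + Real.logb 2 n :=
          Real.logb_mul (by linarith) (by linarith)
  -- RHS identity
  have hRid : ∑ i ∈ Finset.Icc 2 k, (ni i:ℝ) * i * Real.logb 2 ((n:ℝ)/i)
      = (N:ℝ) * Real.logb 2 n - ∑ i ∈ Finset.Icc 2 k, (ni i:ℝ) * i * Real.logb 2 i := by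
    have h : ∀ i ∈ Finset.Icc 2 k, (ni i:ℝ) * i * Real.logb 2 ((n:ℝ)/i)
        = (ni i:ℝ) * i * Real.logb 2 n - (ni i:ℝ) * i * Real.logb 2 i := by
      intro i hi
      obtain ⟨h2i, _⟩ := Finset.mem_Icc.mp hi
      have hiR : (2:ℝ) ≤ (i:ℝ) := by exact_mod_cast h2i
      rw [Real.logb_div (by linarith) (by linarith)]
      ring
    rw [Finset.sum_congr rfl h, Finset.sum_sub_distrib]
    congr 1
    rw [← Finset.sum_mul, hNsum]
  -- bound Σ nᵢ i log i ≤ N log k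
  have hlogi : ∑ i ∈ Finset.Icc 2 k, (ni i:ℝ) * i * Real.logb 2 i
      ≤ (N:ℝ) * Real.logb 2 k := by
    rw [← hNsum, Finset.sum_mul]
    apply Finset.sum_le_sum
    intro i hi
    obtain ⟨h2i, hik⟩ := Finset.mem_Icc.mp hi
    have hiR : (2:ℝ) ≤ (i:ℝ) := by exact_mod_cast h2i
    have hikR : (i:ℝ) ≤ (k:ℝ) := by exact_mod_cast hik
    have := Real.logb_le_logb_of_le one_lt_two (by linarith) hikR
    have hnonneg : 0 ≤ (ni i:ℝ) * (i:ℝ) := by positivity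
    exact mul_le_mul_of_nonneg_left this hnonneg
  rw [hRid]
  have hmul := mul_le_mul_of_nonneg_left step2 (by linarith : (0:ℝ) ≤ (N:ℝ) - n)
  nlinarith [mul_nonneg (by linarith : (0:ℝ) ≤ (n:ℝ)) hlogk,
    mul_nonneg (by linarith : (0:ℝ) ≤ (N:ℝ)) hlogk]
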